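/- Let γ = !![0,1,0; 1,0,0; 0,0,−1]. There is no k ∈ SO(3,ℂ) with γ·conj(k) = k, where conj denotes entrywise complex conjugation. Equivalently, γ is not of the form k·conj(k)⁻¹ for any k ∈ SO(3,ℂ). -/

import Mathlib

open Matrix

theorem stmt19 :
    ¬ ∃ k : Matrix (Fin 3) (Fin 3) ℂ,
        kᵀ * k = 1 ∧ k.det = 1 ∧
        !![(0 : ℂ), 1, 0; 1, 0, 0; 0, 0, -1] * k.map (starRingEnd ℂ) = k := by
  rintro ⟨k, horth, hdet, hconj⟩
  -- k * kᵀ = 1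
  have hkk : k * kᵀ = 1 := mul_eq_one_comm.mp horth
  -- entry (2,2): sum of squares of row 2 equals 1
  have hsum : k 2 0 * k 2 0 + k 2 1 * k 2 1 + k 2 2 * k 2 2 = 1 := by
    have := congrFun (congrFun hkk 2) 2
    simpa [Matrix.mul_apply, Fin.sum_univ_three, Matrix.transpose_apply,
      Matrix.one_apply] using this
  -- entries of row 2 are purely imaginary
  have him : ∀ j : Fin 3, (k 2 j).re = 0 := by
    intro j
    have := congrFun (congrFun hconj 2) j
    simp [Matrix.mul_apply, Fin.sum_univ_three, Matrix.map_apply] at this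
    have h2 : -(starRingEnd ℂ) (k 2 j) = k 2 j := this
    have := congrArg Complex.re h2
    simp [Complex.conj_re] at this
    linarith
  have h0 := him 0
  have h1 := him 1
  have h2 := him 2
  have hre := congrArg Complex.re hsum
  simp [Complex.add_re, Complex.mul_re, h0, h1, h2] at hre
  nlinarith [sq_nonneg (k 2 0).im, sq_nonneg (k 2 1).im, sq_nonneg (k 2 2).im]
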